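/- Assume the Hypothesis. Then for every a,b ∈ K and x ∈ O, x·f(a) + f(b) ∈ f(K). -/

import Mathlib

open scoped Classical

/-- The cross-ratio `[a,b;c,d]` on the projective line `F ∪ {∞}` (modelled as
`Option F`, with `none` playing the role of `∞`), with the usual conventions
at `∞`; junk value `0` when two or more of the arguments are `∞`. -/
noncomputable def crossRatio {F : Type*} [Field F] :
    Option F → Option F → Option F → Option F → F
  | none,   some b, some c, some d => (d - b) / (c - b)
  | some a, none,   some c, some d => (c - a) / (d - a)
  | some a, some b, none,   some d => (d - b) / (d - a)
  | some a, some b, some c, none   => (c - a) / (c - b)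
  | some a, some b, some c, some d => ((c - a) / (c - b)) * ((d - b) / (d - a))
  | _, _, _, _ => 0

/-- A permutation `f` of the projective line is `O`-preserving if for all
quadruples of distinct points, `[a,b;c,d] ∈ O ↔ [f a, f b; f c, f d] ∈ O`. -/
def OPreserving {F : Type*} [Field F] (O : Set F) (f : Equiv.Perm (Option F)) : Prop :=
  ∀ a b c d : Option F, a ≠ b → a ≠ c → a ≠ d → b ≠ c → b ≠ d → c ≠ d →
    (crossRatio a b c d ∈ O ↔ crossRatio (f a) (f b) (f c) (f d) ∈ O)

/-- The map `F → F` induced by a permutation of `F ∪ {∞}` fixing `∞`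
(junk value `0` if `f` maps a finite point to `∞`). -/
noncomputable def fmap {F : Type*} [Field F] (f : Equiv.Perm (Option F)) (a : F) : F :=
  (f (some a)).getD 0

/-- Here `Subfield.closure O` is the subfield `K = k(O)` of `F` generated by `O`
(over the prime field `k`), and `fmap f '' K` is the image `f(K)` of `K` under `f`. -/
theorem first_closure_two {F : Type*} [Field F]
    (O : Set F) (hne : O.Nonempty) (hO : ∀ x ∈ O, x ≠ 0 ∧ x ≠ 1)
    (f : Equiv.Perm (Option F)) (hf : OPreserving O f)
    (hinf : f none = none) (h0 : f (some 0) = some 0) (h1 : f (some 1) = some 1) :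
    ∀ a ∈ Subfield.closure O, ∀ b ∈ Subfield.closure O, ∀ x ∈ O,
      x * fmap f a + fmap f b ∈ fmap f '' (Subfield.closure O : Set F) := by
  intro a haK b hbK x hxO
  set K := Subfield.closure O with hKdef
  have hOK : O ⊆ (K : Set F) := Subfield.subset_closure
  -- f sends some to some
  have fsome : ∀ y : F, f (some y) = some (fmap f y) := by
    intro y
    rcases h : f (some y) with _ | z
    · exact absurd (f.injective (h.trans hinf.symm)) (by simp)
    · simp [fmap, h]
  have gInj : ∀ y z : F, fmap f y = fmap f z → y = z := by
    intro y z h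
    have h2 : f (some y) = f (some z) := by rw [fsome y, fsome z, h]
    exact Option.some.inj (f.injective h2)
  have g0 : fmap f 0 = (0 : F) := by
    have := fsome 0; rw [h0] at this; exact (Option.some.inj this).symm
  have hpre : ∀ t : F, ∃ c : F, fmap f c = t := by
    intro t
    rcases h : f.symm (some t) with _ | c
    · have := f.apply_symm_apply (some t)
      rw [h, hinf] at this; cases this
    · have h2 := f.apply_symm_apply (some t)
      rw [h] at h2
      refine ⟨c, ?_⟩
      have := fsome c; rw [h2] at this; exact (Option.some.inj this).symm
  have gne : ∀ y z : F, fmap f y ≠ fmap f z → (some y : Option F) ≠ some z := by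
    intro y z h hyz
    exact h (by rw [Option.some.inj hyz])
  have hx0 : x ≠ 0 := (hO x hxO).1
  have hx1 : x ≠ 1 := (hO x hxO).2
  have h1x : (1 : F) - x ≠ 0 := sub_ne_zero.mpr fun h => hx1 h.symm
  -- Lemma B : for c ∈ K, fmap f c / (1 - x) ∈ fmap f '' K
  have hdivB : ∀ c ∈ K, fmap f c / (1 - x) ∈ fmap f '' (K : Set F) := by
    intro c hcK
    by_cases hc0 : c = 0
    · subst hc0
      rw [g0, zero_div]
      exact ⟨0, K.zero_mem, g0⟩
    · have hgc0 : fmap f c ≠ 0 := fun h => hc0 (gInj c 0 (by rw [h, g0]))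
      set t : F := fmap f c / (1 - x) with htdef
      have ht0 : t ≠ 0 := div_ne_zero hgc0 h1x
      have htc : t ≠ fmap f c := by
        intro h
        have h' : fmap f c / (1 - x) = fmap f c := htdef.symm.trans h
        have h2 : fmap f c = fmap f c * (1 - x) := (div_eq_iff h1x).mp h'
        have h3 : (1 : F) - x = 1 := by
          apply mul_left_cancel₀ hgc0
          rw [← h2, mul_one]
        exact hx0 (by linear_combination -h3)
      obtain ⟨d, hgd⟩ := hpre t
      have key := (hf (some 0) (some c) none (some d)
        (gne 0 c (by rw [g0]; exact fun h => hgc0 h.symm))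
        (by simp) (gne 0 d (by rw [g0, hgd]; exact fun h => ht0 h.symm))
        (by simp) (gne c d (by rw [hgd]; exact fun h => htc h.symm))
        (by simp)).2
      rw [h0, hinf, fsome c, fsome d, hgd] at key
      have hcr : crossRatio (some (0:F)) (some (fmap f c)) none (some t) = x := by
        simp only [crossRatio]
        rw [htdef]
        field_simp
        rw [mul_zero, sub_zero, div_eq_iff hgc0]; ring
      rw [hcr] at key
      have hmem := key hxO
      simp only [crossRatio] at hmem
      -- hmem : (d - c) / (d - 0) ∈ O
      set y : F := (d - c) / (d - 0) with hydef
      have hd0 : d ≠ 0 := fun h => ht0 (by rw [← hgd, h, g0])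
      have hy1 : (1 : F) - y ≠ 0 :=
        sub_ne_zero.mpr fun h => (hO y hmem).2 h.symm
      have hdc : d - c = y * d := by
        rw [hydef]; field_simp; ring
      have hdeq : d = c / (1 - y) := by
        rw [eq_div_iff hy1]; linear_combination hdc
      refine ⟨d, ?_, hgd⟩
      rw [hdeq]
      exact K.div_mem hcK (K.sub_mem K.one_mem (hOK hmem))
  -- Lemma A not needed separately; main argument:
  by_cases hdeg : fmap f b = (1 - x) * fmap f a
  · refine ⟨a, haK, ?_⟩
    rw [hdeg]; ring
  · obtain ⟨b', hb'K, hgb'⟩ := hdivB b hbK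
    set p : F := fmap f b / (1 - x) with hpdef
    set t : F := x * fmap f a + fmap f b with htdef
    have hpa : p ≠ fmap f a := by
      intro h
      apply hdeg
      rw [hpdef] at h
      field_simp at h
      rw [h]
    have hta : t ≠ fmap f a := by
      intro h
      apply hdeg
      rw [htdef] at h
      linear_combination h
    have hkey : t - p = x * (fmap f a - p) := by
      rw [htdef, hpdef]; field_simp; ring
    have htp : t ≠ p := by
      intro h
      have : x * (fmap f a - p) = 0 := by rw [← hkey, h, sub_self]
      rcases mul_eq_zero.mp this with h' | h'
      · exact hx0 h'
      · exact hpa (sub_eq_zero.mp h').symm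
    obtain ⟨d, hgd⟩ := hpre t
    have key := (hf none (some b') (some a) (some d)
      (by simp) (by simp) (by simp)
      (gne b' a (by rw [hgb']; exact hpa))
      (gne b' d (by rw [hgb', hgd]; exact fun h => htp h.symm))
      (gne a d (by rw [hgd]; exact fun h => hta h.symm))).2
    rw [hinf, fsome b', fsome a, fsome d, hgb', hgd] at key
    have hcr : crossRatio (none : Option F) (some p) (some (fmap f a)) (some t) = x := by
      simp only [crossRatio]
      rw [hkey]
      rw [mul_div_assoc, div_self (sub_ne_zero.mpr (fun h => hpa h.symm)), mul_one]
    rw [hcr] at key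
    have hmem := key hxO
    simp only [crossRatio] at hmem
    -- hmem : (d - b') / (a - b') ∈ O
    set y : F := (d - b') / (a - b') with hydef
    have hab' : a - b' ≠ 0 := sub_ne_zero.mpr fun h =>
      hpa (by rw [← hgb', h])
    have hdc : d - b' = y * (a - b') := by
      rw [hydef]; field_simp
    have hdeq : d = b' + y * (a - b') := by linear_combination hdc
    refine ⟨d, ?_, hgd⟩
    rw [hdeq]
    exact K.add_mem hb'K (K.mul_mem (hOK hmem) (K.sub_mem haK hb'K))
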